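/- Let Q be a real d×d matrix, λ ∈ ℝ^d, n ∈ ℕ, and x(0) ∈ ℝ^d, all regarded as complex. Let A be the (n+1)×(n+1) matrix with A_{ii} = −(n−i), A_{i+1,i} = n−i, other entries zero, and let 𝐐 = A ⊗ diag(λ) + I_{n+1} ⊗ Q. For u ∈ ℝ let e(u) = (1, e^{iu}, e^{2iu}, …, e^{niu}) ∈ ℂ^{n+1}. Then for every t ∈ ℝ and u ∈ ℝ, (e(u)ᵀ ⊗ I_d) · exp(t𝐐) · (e_0 ⊗ x(0)) = ∑_{k=0}^{n} C(n,k) · e^{iuk} · (1 − e^{iu})^{n−k} · exp(t(Q − (n−k)·diag(λ))) · x(0). -/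

import Mathlib

open Kronecker NormedSpace Matrix

section helpers
open Finset
def Sfun (n i k : ℕ) : ℂ := if k ≤ i then (-1 : ℂ)^(i-k) * ((n-k).choose (i-k) : ℕ) else 0
def Tfun (n i j : ℕ) : ℂ := if j ≤ i then (((n-j).choose (i-j) : ℕ) : ℂ) else 0

lemma alt_sum (I : ℕ) :
    ∑ m ∈ range (I+1), (-1 : ℂ)^(I-m) * ((I.choose m : ℕ) : ℂ) = if I = 0 then 1 else 0 := by
  have h1 : ∑ m ∈ range (I+1), (-1 : ℂ)^(I-m) * ((I.choose m : ℕ) : ℂ)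
      = ∑ m ∈ range (I+1), (-1 : ℂ)^m * ((I.choose m : ℕ) : ℂ) := by
    rw [← Finset.sum_range_reflect]
    refine Finset.sum_congr rfl fun m hm => ?_
    rw [mem_range] at hm
    have hmI : m ≤ I := Nat.lt_succ_iff.mp hm
    rw [show I + 1 - 1 - m = I - m from by omega, Nat.choose_symm hmI,
      show I - (I - m) = m from by omega]
  rw [h1]
  have h2 := congrArg (Int.cast : ℤ → ℂ) (Int.alternating_sum_range_choose (n := I))
  push_cast at h2
  convert h2 using 2

lemma ST_entry (n i j : ℕ) (hi : i ≤ n) :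
    ∑ k ∈ range (n+1), Sfun n i k * Tfun n k j = if i = j then 1 else 0 := by
  have hvan0 : ∀ k, ¬ (j ≤ k ∧ k ≤ i) → Sfun n i k * Tfun n k j = 0 := by
    intro k hk
    unfold Sfun Tfun
    rcases Nat.lt_or_ge i k with h | h
    · rw [if_neg (by omega), zero_mul]
    · rw [if_neg (show ¬ j ≤ k by omega), mul_zero]
  by_cases hij : j ≤ i
  · have hsub : Finset.Icc j i ⊆ range (n+1) := by
      intro k hk; rw [mem_Icc] at hk; rw [mem_range]; omega
    have hvan : ∀ k ∈ range (n+1), k ∉ Finset.Icc j i → Sfun n i k * Tfun n k j = 0 := by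
      intro k _ hk; rw [mem_Icc] at hk; exact hvan0 k hk
    rw [← Finset.sum_subset hsub hvan]
    rw [show Finset.Icc j i = Finset.Ico j (i+1) from rfl]
    rw [Finset.sum_Ico_eq_sum_range]
    rw [show i + 1 - j = (i - j) + 1 from by omega]
    have hterm : ∀ m ∈ range ((i-j)+1),
        Sfun n (i) (j+m) * Tfun n (j+m) j
          = ((n-j).choose (i-j) : ℂ) * ((-1:ℂ)^((i-j)-m) * (((i-j).choose m : ℕ) : ℂ)) := by
      intro m hm
      rw [mem_range, Nat.lt_succ_iff] at hm
      unfold Sfun Tfun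
      rw [if_pos (by omega), if_pos (by omega)]
      rw [show i - (j+m) = (i-j) - m from by omega, show n - (j+m) = (n-j) - m from by omega,
        show j + m - j = m from by omega]
      have hc : (n-j).choose (i-j) * (i-j).choose m = (n-j).choose m * ((n-j)-m).choose ((i-j)-m) :=
        Nat.choose_mul hm
      have hc' : (((n-j).choose (i-j) : ℕ) : ℂ) * (((i-j).choose m : ℕ) : ℂ)
          = (((n-j).choose m : ℕ) : ℂ) * ((((n-j)-m).choose ((i-j)-m) : ℕ) : ℂ) := by
        exact_mod_cast hc
      linear_combination - ((-1:ℂ))^(i-j-m) * hc'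
    rw [Finset.sum_congr rfl hterm, ← Finset.mul_sum, alt_sum (i-j)]
    by_cases h : i = j
    · simp [h]
    · rw [if_neg (by omega), if_neg h, mul_zero]
  · have : ∀ k ∈ range (n+1), Sfun n i k * Tfun n k j = 0 := fun k _ => hvan0 k (by omega)
    rw [Finset.sum_eq_zero this, if_neg (by omega)]


lemma AS_entry (n i k : ℕ) (hi : i ≤ n) :
    ∑ j ∈ range (n+1),
      (if i = j then -((n-i : ℕ) : ℂ) else if i = j+1 then ((n-j : ℕ) : ℂ) else 0) * Sfun n j k
      = Sfun n i k * (-((n-k : ℕ) : ℂ)) := by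
  have hsplit : ∀ j,
      (if i = j then -((n-i : ℕ) : ℂ) else if i = j+1 then ((n-j : ℕ) : ℂ) else 0) * Sfun n j k
        = (if i = j then -((n-i : ℕ) : ℂ) * Sfun n j k else 0)
          + (if i = j+1 then ((n-j : ℕ) : ℂ) * Sfun n j k else 0) := by
    intro j
    by_cases h1 : i = j
    · rw [if_pos h1, if_pos h1, if_neg (by omega), add_zero]
    · rw [if_neg h1, if_neg h1, zero_add]
      by_cases h2 : i = j + 1
      · rw [if_pos h2, if_pos h2]
      · rw [if_neg h2, if_neg h2, zero_mul]
  rw [Finset.sum_congr rfl fun j _ => hsplit j, Finset.sum_add_distrib]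
  rw [Finset.sum_ite_eq (range (n+1)) i (fun j => -((n-i : ℕ) : ℂ) * Sfun n j k),
    if_pos (by rw [mem_range]; omega)]
  rcases Nat.eq_zero_or_eq_succ_pred i with h0 | hsucc
  · subst h0
    have : ∀ j ∈ range (n+1), (if 0 = j+1 then ((n-j : ℕ) : ℂ) * Sfun n j k else 0) = 0 := by
      intro j _; rw [if_neg (by omega)]
    rw [Finset.sum_eq_zero this, add_zero]
    unfold Sfun
    by_cases hk : k = 0
    · subst hk; simp
    · rw [if_neg (by omega)]; ring
  · set m := i - 1 with hm
    have him : i = m + 1 := by omega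
    have hcond : ∀ j, (i = j + 1) = (m = j) := by intro j; rw [him]; simp [Nat.succ_inj]
    have hsum2 : (∑ j ∈ range (n+1), if i = j+1 then ((n-j : ℕ) : ℂ) * Sfun n j k else 0)
        = ∑ j ∈ range (n+1), if m = j then ((n-j : ℕ) : ℂ) * Sfun n j k else 0 :=
      Finset.sum_congr rfl fun j _ => by simp only [hcond]
    rw [hsum2, Finset.sum_ite_eq (range (n+1)) m (fun j => ((n-j : ℕ) : ℂ) * Sfun n j k),
      if_pos (by rw [mem_range]; omega)]
    unfold Sfun
    rcases Nat.lt_or_ge m k with hk1 | hk1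
    · rcases Nat.lt_or_ge i k with hk2 | hk2
      · rw [if_neg (by omega), if_neg (by omega)]; ring
      · rw [if_pos (by omega), if_neg (by omega)]
        rw [show i - k = 0 from by omega, show n - k = n - i from by omega]
        simp
    · rw [if_pos (by omega), if_pos (by omega)]
      have hik : i - k = (m - k) + 1 := by omega
      have h := Nat.choose_succ_right_eq (n-k) (m-k)
      rw [show n - k - (m - k) = n - m from by omega] at h
      have hnat : ((m-k)+1) * ((n-k).choose ((m-k)+1)) = (n-m) * ((n-k).choose (m-k)) := by
        rw [Nat.mul_comm, h, Nat.mul_comm]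
      have hnat' : (((m-k)+1 : ℕ) : ℂ) * (((n-k).choose ((m-k)+1) : ℕ) : ℂ)
          = ((n-m : ℕ) : ℂ) * (((n-k).choose (m-k) : ℕ) : ℂ) := by exact_mod_cast hnat
      have hcast : ((n-k : ℕ) : ℂ) - ((n-i : ℕ) : ℂ) = (((m-k)+1 : ℕ) : ℂ) := by
        have h2 : (n-k) = (n-i) + ((m-k)+1) := by omega
        rw [h2]; push_cast; ring
      rw [hik, pow_succ]
      push_cast at hnat' hcast ⊢
      linear_combination (-((-1:ℂ))^(m-k)) * hnat' - ((-1:ℂ))^(m-k) * (((n-k).choose ((m-k)+1) : ℕ) : ℂ) * hcast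

lemma row_sum (n k : ℕ) (z : ℂ) (hk : k ≤ n) :
    ∑ j ∈ range (n+1), z^j * Sfun n j k = z^k * (1-z)^(n-k) := by
  have hsub : Finset.Icc k n ⊆ range (n+1) := by
    intro j hj; rw [mem_Icc] at hj; rw [mem_range]; omega
  have hvan : ∀ j ∈ range (n+1), j ∉ Finset.Icc k n → z^j * Sfun n j k = 0 := by
    intro j hj hj2
    rw [mem_range] at hj; rw [mem_Icc] at hj2
    unfold Sfun
    rw [if_neg (by omega), mul_zero]
  rw [← Finset.sum_subset hsub hvan]
  rw [show Finset.Icc k n = Finset.Ico k (n+1) from rfl, Finset.sum_Ico_eq_sum_range,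
    show n + 1 - k = (n - k) + 1 from by omega]
  have hterm : ∀ m ∈ range ((n-k)+1),
      z^(k+m) * Sfun n (k+m) k = z^k * ((-z)^m * 1^((n-k)-m) * (((n-k).choose m : ℕ) : ℂ)) := by
    intro m hm
    rw [mem_range, Nat.lt_succ_iff] at hm
    unfold Sfun
    rw [if_pos (by omega), show k + m - k = m from by omega]
    rw [pow_add, neg_pow z m]
    ring
  rw [Finset.sum_congr rfl hterm, ← Finset.mul_sum, ← add_pow (-z) 1 (n-k)]
  ring_nf

open Matrix in
lemma exp_reindex {m n : Type*} [Fintype m] [DecidableEq m] [Fintype n] [DecidableEq n]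
    (e : m ≃ n) (M : Matrix m m ℂ) :
    NormedSpace.exp (Matrix.reindex e e M) = Matrix.reindex e e (NormedSpace.exp M) := by
  letI : SeminormedRing (Matrix m m ℂ) := Matrix.linftyOpSemiNormedRing
  letI : NormedRing (Matrix m m ℂ) := Matrix.linftyOpNormedRing
  letI : NormedAlgebra ℂ (Matrix m m ℂ) := Matrix.linftyOpNormedAlgebra
  letI : SeminormedRing (Matrix n n ℂ) := Matrix.linftyOpSemiNormedRing
  letI : NormedRing (Matrix n n ℂ) := Matrix.linftyOpNormedRing
  letI : NormedAlgebra ℂ (Matrix n n ℂ) := Matrix.linftyOpNormedAlgebra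
  letI : NormedAlgebra ℚ (Matrix m m ℂ) := Matrix.linftyOpNormedAlgebra
  letI : NormedAlgebra ℚ (Matrix n n ℂ) := Matrix.linftyOpNormedAlgebra
  have hc : Continuous (Matrix.reindexAlgEquiv ℂ ℂ e) :=
    LinearMap.continuous_of_finiteDimensional (Matrix.reindexAlgEquiv ℂ ℂ e).toLinearMap
  exact (NormedSpace.map_exp (Matrix.reindexAlgEquiv ℂ ℂ e) hc M).symm

end helpers

/-- Characteristic-function identity `(e(u)ᵀ ⊗ I) exp(t𝐐) (e₀ ⊗ x(0)) = ∑ₖ C(n,k) e^{iuk}(1-e^{iu})^{n-k} exp(t Q_{(n-k)λ}) x(0)`. -/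
theorem stmt_7 (d : ℕ) (hd : 1 ≤ d) (n : ℕ)
    (Q : Matrix (Fin d) (Fin d) ℝ) (l : Fin d → ℝ) (x0 : Fin d → ℂ)
    (Qc : Matrix (Fin d) (Fin d) ℂ) (hQc : Qc = Q.map (Complex.ofReal))
    (lc : Fin d → ℂ) (hlc : lc = fun i => (l i : ℂ))
    (A : Matrix (Fin (n + 1)) (Fin (n + 1)) ℂ)
    (hA : ∀ i j : Fin (n + 1), A i j =
      if i = j then -((n - (i : ℕ) : ℕ) : ℂ)
      else if (i : ℕ) = (j : ℕ) + 1 then ((n - (j : ℕ) : ℕ) : ℂ) else 0)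
    (bQ : Matrix (Fin (n + 1) × Fin d) (Fin (n + 1) × Fin d) ℂ)
    (hbQ : bQ = A ⊗ₖ Matrix.diagonal lc + (1 : Matrix (Fin (n + 1)) (Fin (n + 1)) ℂ) ⊗ₖ Qc)
    (v0 : Fin (n + 1) × Fin d → ℂ)
    (hv0 : v0 = fun p => if p.1 = 0 then x0 p.2 else 0)
    (t u : ℝ) :
    (fun a : Fin d => ∑ j : Fin (n + 1),
        Complex.exp (Complex.I * u * (j : ℕ)) * (exp ((t : ℂ) • bQ) *ᵥ v0) (j, a)) =
      ∑ k ∈ Finset.range (n + 1),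
        ((Nat.choose n k : ℂ) * Complex.exp (Complex.I * u * k) *
            (1 - Complex.exp (Complex.I * u)) ^ (n - k)) •
          (exp ((t : ℂ) • (Qc - ((n - k : ℕ) : ℂ) • Matrix.diagonal lc)) *ᵥ x0) := by
  classical
  set S : Matrix (Fin (n+1)) (Fin (n+1)) ℂ := Matrix.of fun i k : Fin (n+1) => Sfun n i k with hSdef
  set Tm : Matrix (Fin (n+1)) (Fin (n+1)) ℂ := Matrix.of fun i j : Fin (n+1) => Tfun n i j with hTdef
  set D : Matrix (Fin (n+1)) (Fin (n+1)) ℂ :=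
    Matrix.diagonal (fun k : Fin (n+1) => -((n - (k:ℕ) : ℕ) : ℂ)) with hDdef
  have hST : S * Tm = 1 := by
    ext i k
    have h1 : (S * Tm) i k = ∑ j ∈ Finset.range (n+1), Sfun n i j * Tfun n j k := by
      rw [Matrix.mul_apply]
      exact Fin.sum_univ_eq_sum_range (fun j => Sfun n i j * Tfun n j k) (n+1)
    rw [h1, ST_entry n i k (by omega), Matrix.one_apply]
    simp [Fin.ext_iff]
  have hTS : Tm * S = 1 := mul_eq_one_comm.mp hST
  have hAS : A * S = S * D := by
    ext i k
    rw [Matrix.mul_apply, Matrix.mul_diagonal]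
    have h1 : ∑ j : Fin (n+1), A i j * S j k
        = ∑ j ∈ Finset.range (n+1),
            (if (i:ℕ) = j then -((n-(i:ℕ) : ℕ) : ℂ)
              else if (i:ℕ) = j+1 then ((n-j : ℕ) : ℂ) else 0) * Sfun n j k := by
      rw [← Fin.sum_univ_eq_sum_range (fun j =>
        (if (i:ℕ) = j then -((n-(i:ℕ) : ℕ) : ℂ)
          else if (i:ℕ) = j+1 then ((n-j : ℕ) : ℂ) else 0) * Sfun n j k) (n+1)]
      refine Finset.sum_congr rfl fun j _ => ?_
      rw [hA i j]
      simp only [Fin.ext_iff]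
      rfl
    rw [h1, AS_entry n i k (by omega)]
    rfl
  -- Kronecker conjugation
  set P : Matrix (Fin (n+1) × Fin d) (Fin (n+1) × Fin d) ℂ :=
    S ⊗ₖ (1 : Matrix (Fin d) (Fin d) ℂ) with hPdef
  set Pi' : Matrix (Fin (n+1) × Fin d) (Fin (n+1) × Fin d) ℂ :=
    Tm ⊗ₖ (1 : Matrix (Fin d) (Fin d) ℂ) with hPidef
  have hPP : P * Pi' = 1 := by
    rw [hPdef, hPidef, ← Matrix.mul_kronecker_mul, hST, Matrix.one_mul, Matrix.one_kronecker_one]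
  have hPP' : Pi' * P = 1 := by
    rw [hPdef, hPidef, ← Matrix.mul_kronecker_mul, hTS, Matrix.one_mul, Matrix.one_kronecker_one]
  set B : Matrix (Fin (n+1) × Fin d) (Fin (n+1) × Fin d) ℂ :=
    D ⊗ₖ Matrix.diagonal lc + (1 : Matrix (Fin (n+1)) (Fin (n+1)) ℂ) ⊗ₖ Qc with hBdef
  have hSDT : S * D * Tm = A := by
    rw [← hAS, Matrix.mul_assoc, hST, Matrix.mul_one]
  have hbQc : bQ = P * B * Pi' := by
    rw [hbQ, hBdef, Matrix.mul_add, Matrix.add_mul]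
    congr 1
    · rw [hPdef, hPidef, ← Matrix.mul_kronecker_mul, ← Matrix.mul_kronecker_mul,
        Matrix.one_mul, Matrix.mul_one, hSDT]
    · rw [hPdef, hPidef, ← Matrix.mul_kronecker_mul, ← Matrix.mul_kronecker_mul,
        Matrix.one_mul, Matrix.mul_one, Matrix.mul_one, hST]
  -- exponential via conjugation
  set U : (Matrix (Fin (n + 1) × Fin d) (Fin (n + 1) × Fin d) ℂ)ˣ :=
    ⟨P, Pi', hPP, hPP'⟩ with hUdef
  have hexpconj : exp ((t : ℂ) • bQ) = P * exp ((t : ℂ) • B) * Pi' := by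
    have harg : (t : ℂ) • bQ = U.val * ((t : ℂ) • B) * (U⁻¹).val := by
      show _ = P * ((t : ℂ) • B) * Pi'
      rw [hbQc, mul_smul_comm, smul_mul_assoc]
    rw [harg]
    exact Matrix.exp_units_conj U ((t : ℂ) • B)
  -- block diagonal structure
  set E : Fin (n+1) → Matrix (Fin d) (Fin d) ℂ := fun k =>
    exp ((t : ℂ) • (Qc - ((n - (k:ℕ) : ℕ) : ℂ) • Matrix.diagonal lc)) with hEdef
  set pe : Fin d × Fin (n+1) ≃ Fin (n+1) × Fin d := Equiv.prodComm _ _ with hpedef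
  have hBblock : (t : ℂ) • B = Matrix.reindex pe pe
      (Matrix.blockDiagonal fun k : Fin (n+1) =>
        (t : ℂ) • (Qc - ((n - (k:ℕ) : ℕ) : ℂ) • Matrix.diagonal lc)) := by
    ext ⟨j, a⟩ ⟨k, b⟩
    simp only [hBdef, hDdef, Matrix.smul_apply, Matrix.add_apply, Matrix.kroneckerMap_apply,
      Matrix.reindex_apply, Matrix.submatrix_apply, Matrix.blockDiagonal_apply, hpedef,
      Equiv.prodComm_symm, Equiv.prodComm_apply, Prod.swap_prod_mk, Matrix.one_apply,
      Matrix.diagonal_apply, Matrix.sub_apply, smul_eq_mul]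
    by_cases hjk : j = k
    · subst hjk
      simp only [if_pos rfl]
      split_ifs <;> ring
    · simp [hjk]
  have hexpBapp : ∀ (j k : Fin (n+1)) (a b : Fin d),
      exp ((t : ℂ) • B) (j, a) (k, b) = if j = k then E j a b else 0 := by
    have hpi : exp (fun k : Fin (n+1) =>
          (t : ℂ) • (Qc - ((n - (k:ℕ) : ℕ) : ℂ) • Matrix.diagonal lc))
        = fun k : Fin (n+1) => E k := by
      letI : SeminormedRing (Matrix (Fin d) (Fin d) ℂ) := Matrix.linftyOpSemiNormedRing
      letI : NormedRing (Matrix (Fin d) (Fin d) ℂ) := Matrix.linftyOpNormedRing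
      letI : NormedAlgebra ℂ (Matrix (Fin d) (Fin d) ℂ) := Matrix.linftyOpNormedAlgebra
      letI : NormedAlgebra ℚ (Matrix (Fin d) (Fin d) ℂ) := Matrix.linftyOpNormedAlgebra
      exact Pi.exp_def _
    intro j k a b
    rw [hBblock, exp_reindex, Matrix.exp_blockDiagonal, hpi]
    simp only [Matrix.reindex_apply, Matrix.submatrix_apply, hpedef, Equiv.prodComm_symm,
      Equiv.prodComm_apply, Prod.swap_prod_mk, Matrix.blockDiagonal_apply]
  -- vector computations
  have h1 : Pi' *ᵥ v0 = fun p : Fin (n+1) × Fin d => ((n.choose p.1 : ℕ) : ℂ) * x0 p.2 := by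
    funext p
    obtain ⟨k, b⟩ := p
    rw [Matrix.mulVec, dotProduct, Fintype.sum_prod_type]
    simp only [hPidef, Matrix.kroneckerMap_apply, hv0, Matrix.one_apply, Matrix.of_apply,
      mul_ite, ite_mul, mul_zero, zero_mul, mul_one]
    calc (∑ x : Fin (n+1), ∑ x1 : Fin d, if x = 0 then (if b = x1 then Tm k x * x0 x1 else 0) else 0)
        = ∑ x : Fin (n+1), (if x = 0 then Tm k x * x0 b else 0) := by
          refine Finset.sum_congr rfl fun x _ => ?_
          by_cases hx : x = 0
          · simp only [if_pos hx]
            rw [Finset.sum_ite_eq Finset.univ b (fun x1 => Tm k x * x0 x1),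
              if_pos (Finset.mem_univ _)]
          · simp [hx]
      _ = Tm k 0 * x0 b := by
          rw [Finset.sum_ite_eq' Finset.univ (0 : Fin (n+1)) (fun x => Tm k x * x0 b),
            if_pos (Finset.mem_univ _)]
      _ = ((n.choose (k:ℕ) : ℕ) : ℂ) * x0 b := by
          have : Tm k 0 = Tfun n (k:ℕ) 0 := rfl
          rw [this]; unfold Tfun; simp
  have h2 : exp ((t:ℂ)•B) *ᵥ (fun p : Fin (n+1) × Fin d => ((n.choose p.1 : ℕ) : ℂ) * x0 p.2)
      = fun p : Fin (n+1) × Fin d => ((n.choose p.1 : ℕ) : ℂ) * (E p.1 *ᵥ x0) p.2 := by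
    funext p
    obtain ⟨k, b⟩ := p
    rw [Matrix.mulVec, dotProduct, Fintype.sum_prod_type]
    have hterm : ∀ (j : Fin (n+1)) (c : Fin d),
        exp ((t:ℂ)•B) (k,b) (j,c) * (((n.choose (j:ℕ) : ℕ) : ℂ) * x0 c)
          = if k = j then ((n.choose (j:ℕ) : ℕ) : ℂ) * (E k b c * x0 c) else 0 := by
      intro j c
      rw [hexpBapp k j b c]
      by_cases h : k = j
      · rw [if_pos h, if_pos h]; ring
      · rw [if_neg h, if_neg h, zero_mul]
    rw [Finset.sum_congr rfl fun j _ => Finset.sum_congr rfl fun c _ => hterm j c]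
    calc (∑ j : Fin (n+1), ∑ c : Fin d,
            if k = j then ((n.choose (j:ℕ) : ℕ) : ℂ) * (E k b c * x0 c) else 0)
        = ∑ j : Fin (n+1),
            (if k = j then ((n.choose (j:ℕ) : ℕ) : ℂ) * ∑ c : Fin d, E k b c * x0 c else 0) := by
          refine Finset.sum_congr rfl fun j _ => ?_
          by_cases h : k = j
          · simp only [if_pos h, Finset.mul_sum]
          · simp only [if_neg h, Finset.sum_const_zero]
      _ = ((n.choose (k:ℕ) : ℕ) : ℂ) * ∑ c : Fin d, E k b c * x0 c := by
          rw [Finset.sum_ite_eq Finset.univ k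
            (fun j => ((n.choose (j:ℕ) : ℕ) : ℂ) * ∑ c : Fin d, E k b c * x0 c),
            if_pos (Finset.mem_univ _)]
      _ = ((n.choose (k:ℕ) : ℕ) : ℂ) * (E k *ᵥ x0) b := rfl
  have hw : ∀ (j : Fin (n+1)) (a : Fin d), (exp ((t : ℂ) • bQ) *ᵥ v0) (j, a)
      = ∑ k : Fin (n+1), Sfun n j k * (((n.choose (k:ℕ) : ℕ) : ℂ) * (E k *ᵥ x0) a) := by
    intro j a
    rw [hexpconj, ← Matrix.mulVec_mulVec, ← Matrix.mulVec_mulVec, h1, h2]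
    rw [Matrix.mulVec, dotProduct, Fintype.sum_prod_type]
    refine Finset.sum_congr rfl fun k _ => ?_
    calc (∑ c : Fin d, P (j,a) (k,c) * (((n.choose (k:ℕ) : ℕ) : ℂ) * (E k *ᵥ x0) c))
        = ∑ c : Fin d, (if a = c then Sfun n j k * (((n.choose (k:ℕ) : ℕ) : ℂ) * (E k *ᵥ x0) c) else 0) := by
          refine Finset.sum_congr rfl fun c _ => ?_
          have : P (j,a) (k,c) = Sfun n j k * (if a = c then 1 else 0) := by
            rw [hPdef]; simp [Matrix.one_apply]; rfl
          rw [this]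
          by_cases h : a = c
          · rw [if_pos h, if_pos h]; ring
          · rw [if_neg h, if_neg h]; ring
      _ = Sfun n j k * (((n.choose (k:ℕ) : ℕ) : ℂ) * (E k *ᵥ x0) a) := by
          rw [Finset.sum_ite_eq Finset.univ a
            (fun c => Sfun n j k * (((n.choose (k:ℕ) : ℕ) : ℂ) * (E k *ᵥ x0) c)),
            if_pos (Finset.mem_univ _)]
  -- final assembly
  funext a
  simp only [Finset.sum_apply, Pi.smul_apply, smul_eq_mul]
  have hz : ∀ m : ℕ, Complex.exp (Complex.I * u * m) = (Complex.exp (Complex.I * (u:ℂ)))^m := by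
    intro m
    rw [show (Complex.I * (u:ℂ) * (m:ℂ)) = (m:ℂ) * (Complex.I * u) by ring, Complex.exp_nat_mul]
  set z : ℂ := Complex.exp (Complex.I * (u:ℂ)) with hzdef
  calc (∑ j : Fin (n+1), Complex.exp (Complex.I * u * (j:ℕ)) * (exp ((t:ℂ)•bQ) *ᵥ v0) (j, a))
      = ∑ j : Fin (n+1), ∑ k : Fin (n+1),
          z^(j:ℕ) * Sfun n j k * (((n.choose (k:ℕ) : ℕ) : ℂ) * (E k *ᵥ x0) a) := by
        refine Finset.sum_congr rfl fun j _ => ?_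
        rw [hw j a, hz (j:ℕ), Finset.mul_sum]
        exact Finset.sum_congr rfl fun k _ => by ring
    _ = ∑ k : Fin (n+1), ∑ j : Fin (n+1),
          z^(j:ℕ) * Sfun n j k * (((n.choose (k:ℕ) : ℕ) : ℂ) * (E k *ᵥ x0) a) := Finset.sum_comm
    _ = ∑ k : Fin (n+1), (z^(k:ℕ) * (1-z)^(n-(k:ℕ))) * (((n.choose (k:ℕ) : ℕ) : ℂ) * (E k *ᵥ x0) a) := by
        refine Finset.sum_congr rfl fun k _ => ?_
        rw [← Finset.sum_mul]
        congr 1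
        have hrs := row_sum n (k:ℕ) z (by omega)
        rw [← Fin.sum_univ_eq_sum_range (fun j => z^j * Sfun n j (k:ℕ)) (n+1)] at hrs
        exact hrs
    _ = ∑ k ∈ Finset.range (n+1), (z^k * (1-z)^(n-k)) *
          (((n.choose k : ℕ) : ℂ) * (exp ((t:ℂ) • (Qc - ((n - k : ℕ) : ℂ) • Matrix.diagonal lc)) *ᵥ x0) a) :=
        Fin.sum_univ_eq_sum_range (fun k => (z^k * (1-z)^(n-k)) *
          (((n.choose k : ℕ) : ℂ) * (exp ((t:ℂ) • (Qc - ((n - k : ℕ) : ℂ) • Matrix.diagonal lc)) *ᵥ x0) a)) (n+1)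
    _ = ∑ k ∈ Finset.range (n+1),
          ((n.choose k : ℂ) * Complex.exp (Complex.I * u * k) * (1 - z)^(n-k)) *
            (exp ((t:ℂ) • (Qc - ((n - k : ℕ) : ℂ) • Matrix.diagonal lc)) *ᵥ x0) a := by
        refine Finset.sum_congr rfl fun k hk => ?_
        rw [hz k]
        ring
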